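/- A point r* is a critical point of ψ (i.e., grad ψ(r*) = 0) with all trust values T_{ij}(r*) = c₀ − d_i(r*) positive if and only if r* is a fixed point of the reputation iteration: for every item j, r*_j = Σ_{i: i→j} T_{ij}(r*) E_{ij} / Σ_{i: i→j} T_{ij}(r*). -/
import Mathlib


theorem critical_iff_fixed
    (n m : ℕ) (A : Fin n → Fin m → Bool) (E : Fin n → Fin m → ℝ) (c₀ : ℝ)
    (hc : 1 < c₀)
    (hE : ∀ i j, E i j ∈ Set.Icc (0:ℝ) 1)
    (hm : ∀ i : Fin n, 1 ≤ (Finset.univ.filter (fun j => A i j = true)).card)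
    (hn : ∀ j : Fin m, 1 ≤ (Finset.univ.filter (fun i => A i j = true)).card)
    (d : (Fin m → ℝ) → Fin n → ℝ)
    (hd : ∀ r i, d r i = (1 / ((Finset.univ.filter (fun j => A i j = true)).card : ℝ)) *
      ∑ j ∈ Finset.univ.filter (fun j => A i j = true), (E i j - r j) ^ 2)
    (r : Fin m → ℝ) (hr : ∀ j, r j ∈ Set.Icc (0:ℝ) 1)
    (hTpos : ∀ i j, A i j = true → 0 < c₀ - d r i) :
    (∀ j, (4 : ℝ) * ∑ i ∈ Finset.univ.filter (fun i => A i j = true),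
        (c₀ - d r i) * (E i j - r j) = 0) ↔
    (∀ j, r j =
      (∑ i ∈ Finset.univ.filter (fun i => A i j = true), (c₀ - d r i) * E i j) /
      (∑ i ∈ Finset.univ.filter (fun i => A i j = true), (c₀ - d r i))) := by
  have hS : ∀ j : Fin m,
      0 < ∑ i ∈ Finset.univ.filter (fun i => A i j = true), (c₀ - d r i) := by
    intro j
    apply Finset.sum_pos
    · intro i hi
      exact hTpos i j (by simpa using (Finset.mem_filter.mp hi).2)
    · exact Finset.card_pos.mp (hn j)
  have key : ∀ j : Fin m,
      ∑ i ∈ Finset.univ.filter (fun i => A i j = true), (c₀ - d r i) * (E i j - r j)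
      = (∑ i ∈ Finset.univ.filter (fun i => A i j = true), (c₀ - d r i) * E i j)
        - r j * (∑ i ∈ Finset.univ.filter (fun i => A i j = true), (c₀ - d r i)) := by
    intro j
    rw [Finset.mul_sum, ← Finset.sum_sub_distrib]
    apply Finset.sum_congr rfl; intros; ring
  constructor
  · intro h j
    have h4 := h j
    rw [key j] at h4
    have hne := (hS j).ne'
    rw [eq_div_iff hne]
    linarith
  · intro h j
    have hne := (hS j).ne'
    have hj := h j
    rw [eq_div_iff hne] at hj
    rw [key j]
    linarith
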